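/- For every c > 0, the origin of the time-delay system (S_c) is Lyapunov stable: for every ε > 0 there exists δ > 0 such that every solution X of (S_c) with ‖X0‖ ≤ δ satisfies |X(t)| ≤ ε for all t ≥ 0. -/

import Mathlib

set_option maxHeartbeats 1000000


open Set Matrix

/-- The matrix `A0`. -/
noncomputable def A0 : Matrix (Fin 2) (Fin 2) ℝ := !![-0.1, 0.5; -2, 0]

/-- The matrix `A1`. -/
noncomputable def A1 : Matrix (Fin 2) (Fin 2) ℝ := !![0, 2; -0.5, -0.1]

/-- The saturation function `φ`. -/
noncomputable def phi (s : ℝ) : ℝ := if s < 0 then 0 else if s ≤ 1 then s else 1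

/-- `ℝ²` with the Euclidean norm. -/
abbrev E2 : Type := EuclideanSpace ℝ (Fin 2)

/-- Action of a `2 × 2` matrix on `ℝ²`. -/
noncomputable def act (A : Matrix (Fin 2) (Fin 2) ℝ) (x : E2) : E2 :=
  Matrix.toEuclideanLin A x

/-- The nonlinearity `g(x,u) = (1+|x|²)(φ(u) A1 + (1-φ(u)) A0) x`. -/
noncomputable def gfun (x : E2) (u : ℝ) : E2 :=
  (1 + ‖x‖ ^ 2) • act (phi u • A1 + (1 - phi u) • A0) x

/-- `X = (x, z1, z2) : [-2,∞) → ℝ² × ℝ × ℝ` is a solution of the time-delay system `(S_c)`. -/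
def IsSolution (c : ℝ) (x : ℝ → E2) (z1 z2 : ℝ → ℝ) : Prop :=
  ContinuousOn x (Ici (-2 : ℝ)) ∧ ContinuousOn z1 (Ici (-2 : ℝ)) ∧
  ContinuousOn z2 (Ici (-2 : ℝ)) ∧
  ∀ t : ℝ, 0 < t →
    HasDerivAt x ((c * phi (z2 (t - 2))) • gfun (x t) (z1 (t - 1))
      + (c * (1 - phi (z2 (t - 2)))) • act A0 (x t)) t
    ∧ HasDerivAt z1 (-(z1 t)) t ∧ HasDerivAt z2 (-(z2 t)) t

/-- Euclidean norm `|X(t)|` of the full state `(x(t), z1(t), z2(t)) ∈ ℝ⁴`. -/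
noncomputable def Xnorm (x : ℝ → E2) (z1 z2 : ℝ → ℝ) (t : ℝ) : ℝ :=
  Real.sqrt (‖x t‖ ^ 2 + (z1 t) ^ 2 + (z2 t) ^ 2)

/-- Norm `‖X0‖ = sup_{τ ∈ [-2,0]} |X(τ)|` of the initial segment of a solution. -/
noncomputable def initNorm (x : ℝ → E2) (z1 z2 : ℝ → ℝ) : ℝ :=
  sSup (Xnorm x z1 z2 '' Icc (-2 : ℝ) 0)

-- helper lemmas --
lemma act_mix (x : E2) (p : ℝ) (i : Fin 2) :
    act (p • A1 + (1-p) • A0) x i = p * act A1 x i + (1-p) * act A0 x i := by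
  simp [act, map_add, _root_.map_smul]
lemma actA0_0 (x : E2) : act A0 x 0 = -0.1 * x 0 + 0.5 * x 1 := by
  simp [act, A0, Matrix.toEuclideanLin, Matrix.mulVec, Fin.sum_univ_two, dotProduct]
lemma actA0_1 (x : E2) : act A0 x 1 = -2 * x 0 := by
  simp [act, A0, Matrix.toEuclideanLin, Matrix.mulVec, Fin.sum_univ_two, dotProduct]
lemma actA1_0 (x : E2) : act A1 x 0 = 2 * x 1 := by
  simp [act, A1, Matrix.toEuclideanLin, Matrix.mulVec, Fin.sum_univ_two, dotProduct]
lemma actA1_1 (x : E2) : act A1 x 1 = -0.5 * x 0 + -0.1 * x 1 := by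
  simp [act, A1, Matrix.toEuclideanLin, Matrix.mulVec, Fin.sum_univ_two, dotProduct]
lemma norm_sq_E2 (x : E2) : ‖x‖^2 = (x 0)^2 + (x 1)^2 := by
  rw [EuclideanSpace.norm_eq, Real.sq_sqrt (by positivity)]
  simp [Fin.sum_univ_two, sq_abs]
lemma phi_nonneg (s : ℝ) : 0 ≤ phi s := by
  unfold phi; split_ifs <;> linarith
lemma phi_le_one (s : ℝ) : phi s ≤ 1 := by
  unfold phi; split_ifs <;> linarith
lemma phi_le {s d : ℝ} (hsd : s ≤ d) (hd0 : 0 ≤ d) (hd1 : d ≤ 1) : phi s ≤ d := by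
  unfold phi; split_ifs <;> linarith
lemma comp_eval (c q2 : ℝ) (y : E2) (u : ℝ) (i : Fin 2) :
    ((c * q2) • gfun y u + (c * (1 - q2)) • act A0 y) i
    = c * (q2 * (1 + ((y 0)^2 + (y 1)^2)) * (phi u * act A1 y i + (1 - phi u) * act A0 y i)
        + (1 - q2) * act A0 y i) := by
  have h1 : ((c * q2) • gfun y u + (c * (1 - q2)) • act A0 y) i
      = (c * q2) * (gfun y u i) + (c * (1 - q2)) * (act A0 y i) := rfl
  rw [h1]
  have h2 : gfun y u i = (1 + ‖y‖^2) * act (phi u • A1 + (1 - phi u) • A0) y i := rfl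
  rw [h2, act_mix, norm_sq_E2]
  ring

lemma zdecay (z : ℝ → ℝ) (hc : ContinuousOn z (Ici (0:ℝ)))
    (hd : ∀ t > (0:ℝ), HasDerivAt z (-(z t)) t) : ∀ t ≥ (0:ℝ), |z t| ≤ |z 0| := by
  have hanti : AntitoneOn (fun t => z t ^ 2) (Ici (0:ℝ)) := by
    apply antitoneOn_of_deriv_nonpos (convex_Ici 0) (hc.pow 2)
    · intro t ht
      rw [interior_Ici] at ht
      exact ((hd t ht).pow 2).differentiableAt.differentiableWithinAt
    · intro t ht
      rw [interior_Ici] at ht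
      rw [((hd t ht).pow 2).deriv]
      push_cast
      nlinarith [sq_nonneg (z t)]
  intro t ht
  have := hanti (le_refl (0:ℝ)) ht ht
  calc |z t| = Real.sqrt (z t ^ 2) := (Real.sqrt_sq_eq_abs _).symm
    _ ≤ Real.sqrt (z 0 ^ 2) := Real.sqrt_le_sqrt this
    _ = |z 0| := Real.sqrt_sq_eq_abs _

lemma barrier (f f' : ℝ → ℝ) (B b : ℝ) (hb : b < B)
    (hcont : ContinuousOn f (Ici (0:ℝ)))
    (hderiv : ∀ t > (0:ℝ), HasDerivAt f (f' t) t)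
    (hdle : ∀ t > (0:ℝ), f t ≤ B → f' t ≤ 0)
    (h0 : f 0 ≤ b) : ∀ t ≥ (0:ℝ), f t ≤ b := by
  have hB : ∀ t ≥ (0:ℝ), f t ≤ B := by
    by_contra hcon
    push_neg at hcon
    obtain ⟨t2, ht2, hft2⟩ := hcon
    have ht2pos : 0 < t2 := by
      rcases eq_or_lt_of_le ht2 with h | h
      · exfalso; rw [← h] at hft2; linarith
      · exact h
    set S : Set ℝ := Icc 0 t2 ∩ f ⁻¹' (Ici B) with hS
    have hScl : IsClosed S :=
      ContinuousOn.preimage_isClosed_of_isClosed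
        (hcont.mono (Icc_subset_Ici_self)) isClosed_Icc isClosed_Ici
    have hSne : S.Nonempty := ⟨t2, ⟨le_of_lt ht2pos, le_refl _⟩, le_of_lt hft2⟩
    have hSbdd : BddBelow S := ⟨0, fun u hu => hu.1.1⟩
    set t3 := sInf S with ht3
    have ht3mem : t3 ∈ S := hScl.csInf_mem hSne hSbdd
    have ht3B : B ≤ f t3 := ht3mem.2
    have ht3pos : 0 < t3 := by
      rcases eq_or_lt_of_le ht3mem.1.1 with h | h
      · exfalso
        have : B ≤ f 0 := by rw [h]; exact ht3B
        linarith
      · exact h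
    have hlt : ∀ s, 0 ≤ s → s < t3 → f s < B := by
      intro s hs hst
      by_contra hh
      push_neg at hh
      have : s ∈ S := ⟨⟨hs, le_trans (le_of_lt hst) ht3mem.1.2⟩, hh⟩
      exact absurd (csInf_le hSbdd this) (not_le.mpr hst)
    have hanti : AntitoneOn f (Icc 0 t3) := by
      apply antitoneOn_of_deriv_nonpos (convex_Icc 0 t3)
        (hcont.mono (fun u hu => hu.1))
      · intro s hs
        rw [interior_Icc] at hs
        exact (hderiv s hs.1).differentiableAt.differentiableWithinAt
      · intro s hs
        rw [interior_Icc] at hs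
        rw [(hderiv s hs.1).deriv]
        exact hdle s hs.1 (le_of_lt (hlt s (le_of_lt hs.1) hs.2))
    have := hanti ⟨le_refl 0, le_of_lt ht3pos⟩ ⟨le_of_lt ht3pos, le_refl _⟩ (le_of_lt ht3pos)
    linarith
  have hanti : AntitoneOn f (Ici 0) := by
    apply antitoneOn_of_deriv_nonpos (convex_Ici 0) hcont
    · intro s hs
      rw [interior_Ici] at hs
      exact (hderiv s hs).differentiableAt.differentiableWithinAt
    · intro s hs
      rw [interior_Ici] at hs
      rw [(hderiv s hs).deriv]
      exact hdle s hs (hB s (le_of_lt hs))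
  intro t ht
  exact le_trans (hanti (le_refl (0:ℝ)) ht ht) h0

lemma core (a b p q s : ℝ) (hp0 : 0 ≤ p) (hp1 : p ≤ 1) (hq0 : 0 ≤ q) (hq1 : q ≤ 1/200)
    (hs : s = a^2 + b^2) (hs1 : s ≤ 1) :
    (4*a - 0.1*b) * (q*(1+s)*(p*(2*b) + (1-p)*(-0.1*a+0.5*b)) + (1-q)*(-0.1*a+0.5*b))
    + (1.005*b - 0.1*a) * (q*(1+s)*(p*(-0.5*a + -0.1*b) + (1-p)*(-2*a)) + (1-q)*(-2*a)) ≤ 0 := by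
  have h0 : 0 ≤ s := by nlinarith [sq_nonneg a, sq_nonneg b]
  obtain ⟨P0, hP0def⟩ : ∃ P0 : ℝ, P0 = -0.2*a^2 - 0.05*b^2 := ⟨_, rfl⟩
  obtain ⟨P1, hP1def⟩ : ∃ P1 : ℝ, P1 = 0.05*a^2 + 7.5075*a*b - 0.3005*b^2 := ⟨_, rfl⟩
  have hG : (4*a - 0.1*b) * (q*(1+s)*(p*(2*b) + (1-p)*(-0.1*a+0.5*b)) + (1-q)*(-0.1*a+0.5*b))
    + (1.005*b - 0.1*a) * (q*(1+s)*(p*(-0.5*a + -0.1*b) + (1-p)*(-2*a)) + (1-q)*(-2*a))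
      = (1-q)*P0 + q*(1+s)*(p*P1 + (1-p)*P0) := by
    rw [hP0def, hP1def]; ring
  rw [hG]
  have hP0b : P0 ≤ -0.05*s := by rw [hP0def, hs]; nlinarith [sq_nonneg a]
  have hP1b : P1 ≤ 4*s := by
    rw [hP1def, hs]; nlinarith [sq_nonneg (a-b), sq_nonneg a, sq_nonneg b]
  have hinner : p*P1 + (1-p)*P0 ≤ 4*s := by
    nlinarith [mul_le_mul_of_nonneg_left hP1b hp0,
      mul_le_mul_of_nonneg_left hP0b (by linarith : (0:ℝ) ≤ 1-p),
      mul_nonneg (by linarith : (0:ℝ) ≤ 1-p) h0]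
  have h1s : (0:ℝ) ≤ 1 + s := by linarith
  have hqs : 0 ≤ q*s := mul_nonneg hq0 h0
  have hmid : q*(1+s)*(p*P1 + (1-p)*P0) ≤ 8*(q*s) := by
    rcases le_or_gt (p*P1 + (1-p)*P0) 0 with h | h
    · have := mul_nonpos_of_nonneg_of_nonpos (mul_nonneg hq0 h1s) h
      linarith
    · have h2 : q*(1+s) ≤ q*2 := mul_le_mul_of_nonneg_left (by linarith) hq0
      have h3 : q*(1+s)*(p*P1 + (1-p)*P0) ≤ q*2*(p*P1 + (1-p)*P0) :=
        mul_le_mul_of_nonneg_right h2 h.le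
      have h4 : q*2*(p*P1 + (1-p)*P0) ≤ q*2*(4*s) :=
        mul_le_mul_of_nonneg_left hinner (by positivity)
      nlinarith
  have hlast : (1-q)*P0 ≤ -0.05*s + 0.05*(q*s) := by
    nlinarith [mul_le_mul_of_nonneg_left hP0b (by linarith : (0:ℝ) ≤ 1-q)]
  have hqs2 : q*s ≤ 1/200 * s := mul_le_mul_of_nonneg_right hq1 h0
  linarith


/-- Lyapunov stability of the origin of `(S_c)`: for every `ε > 0` there is `δ > 0` such
that every solution with `‖X0‖ ≤ δ` satisfies `|X(t)| ≤ ε` for all `t ≥ 0`. -/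
theorem stmt_8 (c : ℝ) (hc : 0 < c) :
    ∀ ε : ℝ, 0 < ε → ∃ δ : ℝ, 0 < δ ∧
      ∀ (x : ℝ → E2) (z1 z2 : ℝ → ℝ), IsSolution c x z1 z2 →
        initNorm x z1 z2 ≤ δ →
        ∀ t : ℝ, 0 ≤ t → Xnorm x z1 z2 t ≤ ε := by
  intro ε hε
  set m : ℝ := min 1 (ε/3) with hm
  have hm0 : 0 < m := lt_min one_pos (by linarith)
  have hm1 : m ≤ 1 := min_le_left _ _
  have hmε : m ≤ ε/3 := min_le_right _ _
  set δ : ℝ := min (1/200) (m/3) with hδ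
  have hδ0 : 0 < δ := lt_min (by norm_num) (by linarith)
  have hδ200 : δ ≤ 1/200 := min_le_left _ _
  have hδm : δ ≤ m/3 := min_le_right _ _
  refine ⟨δ, hδ0, ?_⟩
  intro x z1 z2 hsol hinit t ht
  obtain ⟨hx, hz1, hz2, hode⟩ := hsol
  have hsub : Icc (-2:ℝ) 0 ⊆ Ici (-2:ℝ) := Icc_subset_Ici_self
  have hsub0 : Ici (0:ℝ) ⊆ Ici (-2:ℝ) := Ici_subset_Ici.mpr (by norm_num)
  -- continuity of Xnorm on the initial segment
  have hXc : ContinuousOn (Xnorm x z1 z2) (Icc (-2:ℝ) 0) := by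
    apply Real.continuous_sqrt.comp_continuousOn
    exact (((hx.mono hsub).norm.pow 2).add ((hz1.mono hsub).pow 2)).add ((hz2.mono hsub).pow 2)
  have hbdd : BddAbove (Xnorm x z1 z2 '' Icc (-2:ℝ) 0) :=
    (isCompact_Icc.image_of_continuousOn hXc).bddAbove
  have hval : ∀ τ ∈ Icc (-2:ℝ) 0, Xnorm x z1 z2 τ ≤ δ := by
    intro τ hτ
    exact le_trans (le_csSup hbdd (mem_image_of_mem _ hτ)) hinit
  -- componentwise bounds by Xnorm
  have hXge_x : ∀ τ, ‖x τ‖ ≤ Xnorm x z1 z2 τ := by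
    intro τ
    calc ‖x τ‖ = Real.sqrt (‖x τ‖^2) := (Real.sqrt_sq (norm_nonneg _)).symm
      _ ≤ Xnorm x z1 z2 τ := Real.sqrt_le_sqrt (by nlinarith [sq_nonneg (z1 τ), sq_nonneg (z2 τ)])
  have hXge_z1 : ∀ τ, |z1 τ| ≤ Xnorm x z1 z2 τ := by
    intro τ
    calc |z1 τ| = Real.sqrt ((z1 τ)^2) := (Real.sqrt_sq_eq_abs _).symm
      _ ≤ Xnorm x z1 z2 τ := Real.sqrt_le_sqrt (by nlinarith [sq_nonneg ‖x τ‖, sq_nonneg (z2 τ)])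
  have hXge_z2 : ∀ τ, |z2 τ| ≤ Xnorm x z1 z2 τ := by
    intro τ
    calc |z2 τ| = Real.sqrt ((z2 τ)^2) := (Real.sqrt_sq_eq_abs _).symm
      _ ≤ Xnorm x z1 z2 τ := Real.sqrt_le_sqrt (by nlinarith [sq_nonneg ‖x τ‖, sq_nonneg (z1 τ)])
  have h02 : (0:ℝ) ∈ Icc (-2:ℝ) 0 := by constructor <;> norm_num
  -- z bounds for all times
  have hz2dec := zdecay z2 (hz2.mono hsub0) (fun s hs => (hode s hs).2.2)
  have hz1dec := zdecay z1 (hz1.mono hsub0) (fun s hs => (hode s hs).2.1)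
  have hz2all : ∀ u ≥ (-2:ℝ), |z2 u| ≤ δ := by
    intro u hu
    rcases le_or_gt u 0 with h | h
    · exact le_trans (hXge_z2 u) (hval u ⟨hu, h⟩)
    · exact le_trans (hz2dec u h.le) (le_trans (hXge_z2 0) (hval 0 h02))
  have hz1all : ∀ u ≥ (0:ℝ), |z1 u| ≤ δ := by
    intro u hu
    exact le_trans (hz1dec u hu) (le_trans (hXge_z1 0) (hval 0 h02))
  have hx0 : ‖x 0‖ ≤ δ := le_trans (hXge_x 0) (hval 0 h02)
  -- scalar component functions of the derivative
  obtain ⟨v0, hv0⟩ : ∃ v : ℝ → ℝ, v = fun s =>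
      ((c * phi (z2 (s - 2))) • gfun (x s) (z1 (s - 1))
        + (c * (1 - phi (z2 (s - 2)))) • act A0 (x s)) 0 := ⟨_, rfl⟩
  obtain ⟨v1, hv1⟩ : ∃ v : ℝ → ℝ, v = fun s =>
      ((c * phi (z2 (s - 2))) • gfun (x s) (z1 (s - 1))
        + (c * (1 - phi (z2 (s - 2)))) • act A0 (x s)) 1 := ⟨_, rfl⟩
  obtain ⟨f, hfdef⟩ : ∃ f : ℝ → ℝ, f = fun s =>
      2*(x s 0)^2 + 0.5025*(x s 1)^2 - 0.1*(x s 0 * x s 1) := ⟨_, rfl⟩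
  obtain ⟨f', hf'def⟩ : ∃ g : ℝ → ℝ, g = fun s =>
      (4*(x s 0) - 0.1*(x s 1)) * v0 s + (1.005*(x s 1) - 0.1*(x s 0)) * v1 s := ⟨_, rfl⟩
  -- evaluation of the derivative components
  have hv0eval : ∀ s : ℝ, v0 s = c * ((phi (z2 (s-2)))*(1+((x s 0)^2+(x s 1)^2))
      *((phi (z1 (s-1)))*(2*(x s 1)) + (1-(phi (z1 (s-1))))*(-0.1*(x s 0)+0.5*(x s 1)))
      + (1-(phi (z2 (s-2))))*(-0.1*(x s 0)+0.5*(x s 1))) := by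
    intro s
    simp only [hv0]
    rw [comp_eval, actA1_0, actA0_0]
  have hv1eval : ∀ s : ℝ, v1 s = c * ((phi (z2 (s-2)))*(1+((x s 0)^2+(x s 1)^2))
      *((phi (z1 (s-1)))*(-0.5*(x s 0) + -0.1*(x s 1)) + (1-(phi (z1 (s-1))))*(-2*(x s 0)))
      + (1-(phi (z2 (s-2))))*(-2*(x s 0))) := by
    intro s
    simp only [hv1]
    rw [comp_eval, actA1_1, actA0_1]
  -- derivatives of the components
  have hax : ∀ s > (0:ℝ), HasDerivAt (fun u => x u 0) (v0 s) s := by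
    intro s hs
    rw [hv0]
    exact (EuclideanSpace.proj (0 : Fin 2)).hasFDerivAt.comp_hasDerivAt s (hode s hs).1
  have hbx : ∀ s > (0:ℝ), HasDerivAt (fun u => x u 1) (v1 s) s := by
    intro s hs
    rw [hv1]
    exact (EuclideanSpace.proj (1 : Fin 2)).hasFDerivAt.comp_hasDerivAt s (hode s hs).1
  have hfderiv : ∀ s > (0:ℝ), HasDerivAt f (f' s) s := by
    intro s hs
    have hA := hax s hs
    have hB := hbx s hs
    have p1 := (hA.pow 2).const_mul (2:ℝ)
    have p2 := (hB.pow 2).const_mul (0.5025:ℝ)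
    have p3 := (hA.mul hB).const_mul (0.1:ℝ)
    have h1 := (p1.add p2).sub p3
    rw [hfdef, hf'def]
    refine HasDerivAt.congr_deriv h1 ?_
    push_cast
    ring
  -- continuity of f on [0,∞)
  have hacont : ContinuousOn (fun u => x u 0) (Ici (0:ℝ)) :=
    (EuclideanSpace.proj (0 : Fin 2)).continuous.comp_continuousOn (hx.mono hsub0)
  have hbcont : ContinuousOn (fun u => x u 1) (Ici (0:ℝ)) :=
    (EuclideanSpace.proj (1 : Fin 2)).continuous.comp_continuousOn (hx.mono hsub0)
  have hfcont : ContinuousOn f (Ici (0:ℝ)) := by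
    rw [hfdef]
    apply ContinuousOn.sub
    apply ContinuousOn.add
    · exact continuousOn_const.mul (hacont.pow 2)
    · exact continuousOn_const.mul (hbcont.pow 2)
    · exact continuousOn_const.mul (hacont.mul hbcont)
  -- derivative sign condition
  have hdle : ∀ s > (0:ℝ), f s ≤ 0.45 → f' s ≤ 0 := by
    intro s hs hfs
    simp only [hfdef] at hfs
    have hs2 : s - 2 ≥ -2 := by linarith
    have hq1' : phi (z2 (s-2)) ≤ 1/200 := by
      apply phi_le _ (by norm_num) (by norm_num)
      calc z2 (s-2) ≤ |z2 (s-2)| := le_abs_self _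
        _ ≤ δ := hz2all _ hs2
        _ ≤ 1/200 := hδ200
    have hssq : (x s 0)^2 + (x s 1)^2 ≤ 1 := by
      nlinarith [sq_nonneg (x s 0 - x s 1), sq_nonneg (x s 0), sq_nonneg (x s 1)]
    have hcore := core (x s 0) (x s 1) (phi (z1 (s-1))) (phi (z2 (s-2)))
      ((x s 0)^2+(x s 1)^2) (phi_nonneg _) (phi_le_one _) (phi_nonneg _) hq1' rfl hssq
    have hfeq : f' s = c * ((4*(x s 0) - 0.1*(x s 1)) *
        ((phi (z2 (s-2)))*(1+((x s 0)^2+(x s 1)^2))*((phi (z1 (s-1)))*(2*(x s 1))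
          + (1-(phi (z1 (s-1))))*(-0.1*(x s 0)+0.5*(x s 1)))
          + (1-(phi (z2 (s-2))))*(-0.1*(x s 0)+0.5*(x s 1)))
        + (1.005*(x s 1) - 0.1*(x s 0)) *
        ((phi (z2 (s-2)))*(1+((x s 0)^2+(x s 1)^2))*((phi (z1 (s-1)))*(-0.5*(x s 0) + -0.1*(x s 1))
          + (1-(phi (z1 (s-1))))*(-2*(x s 0)))
          + (1-(phi (z2 (s-2))))*(-2*(x s 0)))) := by
      simp only [hf'def]
      rw [hv0eval s, hv1eval s]
      ring
    rw [hfeq]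
    exact mul_nonpos_of_nonneg_of_nonpos hc.le hcore
  -- initial value of f
  have hf0 : f 0 ≤ 0.4*m^2 := by
    have h1 : (x 0 0)^2 + (x 0 1)^2 ≤ δ^2 := by
      have h2 : ‖x 0‖^2 ≤ δ^2 := by nlinarith [norm_nonneg (x 0)]
      rw [norm_sq_E2] at h2; exact h2
    have hδm2 : δ^2 ≤ m^2/9 := by nlinarith
    simp only [hfdef]
    nlinarith [sq_nonneg (x 0 0 + x 0 1), sq_nonneg (x 0 0 - x 0 1),
      sq_nonneg (x 0 0), sq_nonneg (x 0 1)]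
  have hbar := barrier f f' 0.45 (0.4*m^2) (by nlinarith) hfcont hfderiv hdle hf0
  -- conclude
  have hxt : ‖x t‖ ≤ m := by
    have hft := hbar t ht
    simp only [hfdef] at hft
    have hs2 : ‖x t‖^2 ≤ m^2 := by
      rw [norm_sq_E2]
      nlinarith [sq_nonneg (x t 0 - x t 1), sq_nonneg (x t 0), sq_nonneg (x t 1)]
    calc ‖x t‖ = Real.sqrt (‖x t‖^2) := (Real.sqrt_sq (norm_nonneg _)).symm
      _ ≤ Real.sqrt (m^2) := Real.sqrt_le_sqrt hs2
      _ = m := Real.sqrt_sq hm0.le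
  have hz1t : |z1 t| ≤ δ := hz1all t ht
  have hz2t : |z2 t| ≤ δ := hz2all t (by linarith)
  rw [Xnorm]
  have hsum : ‖x t‖^2 + (z1 t)^2 + (z2 t)^2 ≤ ε^2 := by
    have h1 : ‖x t‖^2 ≤ (ε/3)^2 := by nlinarith [norm_nonneg (x t)]
    have h2 : (z1 t)^2 ≤ (ε/3)^2 := by nlinarith [abs_nonneg (z1 t), sq_abs (z1 t)]
    have h3 : (z2 t)^2 ≤ (ε/3)^2 := by nlinarith [abs_nonneg (z2 t), sq_abs (z2 t)]
    nlinarith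
  calc Real.sqrt (‖x t‖^2 + (z1 t)^2 + (z2 t)^2) ≤ Real.sqrt (ε^2) := Real.sqrt_le_sqrt hsum
    _ = ε := Real.sqrt_sq hε.le
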